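/- Let φ̂_k(x) = T_k(x) − T_{k+2}(x). For all j, k ∈ ℕ the entries C_{kj} = ⟨φ̂_j', T_k⟩_σ satisfy: C_{kj} = −π(k+1) if j = k−1; C_{kj} = −2π if j ≥ k+1 and j − k is odd; and C_{kj} = 0 otherwise (i.e. whenever j − k is even, or j ≤ k−2). -/

import Mathlib

open Real Polynomial

/-- The k-th Chebyshev polynomial of the first kind, as a real polynomial. -/
noncomputable def chebT (n : ℕ) : Polynomial ℝ := Polynomial.Chebyshev.T ℝ (n : ℤ)

/-- The Chebyshev-weighted inner product `⟨f,g⟩_σ = ∫_{-1}^{1} f g (1-x²)^{-1/2} dx`. -/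
noncomputable def chebInner (f g : Polynomial ℝ) : ℝ :=
  ∫ x in (-1:ℝ)..1, f.eval x * g.eval x / Real.sqrt (1 - x ^ 2)

/-- Shen's Dirichlet basis function `φ̂_k = T_k − T_{k+2}`. -/
noncomputable def shenD (k : ℕ) : Polynomial ℝ := chebT k - chebT (k + 2)

open intervalIntegral MeasureTheory Set in
lemma weight_bound {x : ℝ} (hx : x ∈ Set.Ioc (-1:ℝ) 1) :
    1 / Real.sqrt (1 - x ^ 2) ≤ (1-x) ^ (-(1/2):ℝ) + (1+x) ^ (-(1/2):ℝ) := by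
  rcases eq_or_lt_of_le hx.2 with h1 | h1
  · subst h1
    simp [Real.sqrt_eq_zero']
    positivity
  · have h0 : (0:ℝ) < 1 - x := by linarith
    have h0' : (0:ℝ) < 1 + x := by linarith [hx.1]
    have e1 : (1-x) ^ (-(1/2):ℝ) = (Real.sqrt (1-x))⁻¹ := by
      rw [Real.rpow_neg h0.le, ← Real.sqrt_eq_rpow]
    have e2 : (1+x) ^ (-(1/2):ℝ) = (Real.sqrt (1+x))⁻¹ := by
      rw [Real.rpow_neg h0'.le, ← Real.sqrt_eq_rpow]
    have e3 : Real.sqrt (1 - x^2) = Real.sqrt (1-x) * Real.sqrt (1+x) := by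
      rw [← Real.sqrt_mul h0.le]; ring_nf
    set a := Real.sqrt (1-x) with ha
    set b := Real.sqrt (1+x) with hb
    have hap : 0 < a := Real.sqrt_pos.2 h0
    have hbp : 0 < b := Real.sqrt_pos.2 h0'
    have ha2 : a^2 = 1 - x := Real.sq_sqrt h0.le
    have hb2 : b^2 = 1 + x := Real.sq_sqrt h0'.le
    rw [e1, e2, e3]
    have hab : 1 ≤ a + b := by nlinarith [sq_nonneg (a+b)]
    rw [div_le_iff₀ (by positivity)]
    have he : (a⁻¹ + b⁻¹) * (a * b) = b + a := by field_simp
    rw [he]; linarith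

open intervalIntegral MeasureTheory Set

lemma integrable_poly_div (p : Polynomial ℝ) :
    IntervalIntegrable (fun x => p.eval x / Real.sqrt (1 - x ^ 2)) volume (-1) 1 := by
  obtain ⟨C, hC⟩ := (isCompact_Icc (a := (-1:ℝ)) (b := 1)).exists_bound_of_continuousOn
    (Polynomial.continuous p).continuousOn
  have hC0 : 0 ≤ C := le_trans (norm_nonneg _) (hC 0 (by norm_num))
  have h1 : IntervalIntegrable (fun x : ℝ => x ^ (-(1/2):ℝ)) volume 0 2 :=
    intervalIntegrable_rpow' (by norm_num)
  have h2 : IntervalIntegrable (fun x : ℝ => (1-x) ^ (-(1/2):ℝ)) volume (-1) 1 := by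
    have := (h1.comp_sub_left 1).symm; norm_num at this; exact this
  have h3 : IntervalIntegrable (fun x : ℝ => (1+x) ^ (-(1/2):ℝ)) volume (-1) 1 := by
    have := h1.comp_add_left 1; norm_num at this; exact this
  have hg : IntervalIntegrable
      (fun x : ℝ => C * ((1-x) ^ (-(1/2):ℝ) + (1+x) ^ (-(1/2):ℝ))) volume (-1) 1 :=
    (h2.add h3).const_mul C
  refine hg.mono_fun' ?_ ?_
  · exact ((Polynomial.continuous p).measurable.div
      ((continuous_const.sub (continuous_pow 2)).sqrt.measurable)).aestronglyMeasurable
  · have hmeas : MeasurableSet (Set.uIoc (-1:ℝ) 1) := measurableSet_uIoc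
    filter_upwards [ae_restrict_mem hmeas] with x hx
    rw [Set.uIoc_of_le (by norm_num : (-1:ℝ) ≤ 1)] at hx
    have hb := weight_bound hx
    have hs : 0 ≤ Real.sqrt (1 - x ^ 2) := Real.sqrt_nonneg _
    have hpx : ‖p.eval x‖ ≤ C := hC x ⟨hx.1.le, hx.2⟩
    calc ‖p.eval x / Real.sqrt (1 - x ^ 2)‖
        = ‖p.eval x‖ * (1 / Real.sqrt (1 - x ^ 2)) := by
          rw [norm_div, Real.norm_of_nonneg hs]; ring
      _ ≤ C * ((1-x) ^ (-(1/2):ℝ) + (1+x) ^ (-(1/2):ℝ)) := by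
          apply mul_le_mul hpx hb (by positivity) hC0
noncomputable def cInt (p : Polynomial ℝ) : ℝ :=
  ∫ x in (-1:ℝ)..1, p.eval x / Real.sqrt (1 - x ^ 2)

lemma cInt_zero : cInt 0 = 0 := by simp [cInt]

lemma cInt_add (p q : Polynomial ℝ) : cInt (p + q) = cInt p + cInt q := by
  unfold cInt
  rw [← intervalIntegral.integral_add (integrable_poly_div p) (integrable_poly_div q)]
  simp [add_div]

lemma cInt_C_mul (c : ℝ) (p : Polynomial ℝ) : cInt (Polynomial.C c * p) = c * cInt p := by
  unfold cInt
  rw [← intervalIntegral.integral_const_mul]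
  simp [mul_div_assoc]

lemma cInt_one : cInt 1 = π := by
  unfold cInt
  simp only [Polynomial.eval_one]
  rw [intervalIntegral.integral_eq_sub_of_hasDeriv_right_of_le (by norm_num)
    Real.continuous_arcsin.continuousOn
    (fun x hx => (Real.hasDerivAt_arcsin (ne_of_gt hx.1) (ne_of_lt hx.2)).hasDerivWithinAt)
    (by simpa using integrable_poly_div 1)]
  simp [Real.arcsin_one, Real.arcsin_neg_one]

lemma cInt_T_ne_zero (n : ℕ) (hn : n ≠ 0) : cInt (Polynomial.Chebyshev.T ℝ (n:ℤ)) = 0 := by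
  have hn' : (0:ℝ) < n := by positivity
  set u : Polynomial ℝ := Polynomial.Chebyshev.U ℝ ((n:ℤ) - 1) with hu
  set F : ℝ → ℝ := fun x => -(1/n) * (Real.sqrt (1 - x^2) * u.eval x) with hF
  have hFc : Continuous F := by
    apply Continuous.mul continuous_const
    exact ((continuous_const.sub (continuous_pow 2)).sqrt.mul (Polynomial.continuous u))
  have key : ∀ x ∈ Set.Ioo (-1:ℝ) 1,
      HasDerivAt F ((Polynomial.Chebyshev.T ℝ (n:ℤ)).eval x / Real.sqrt (1 - x ^ 2)) x := by
    intro x hx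
    have hs : (0:ℝ) < 1 - x^2 := by nlinarith [hx.1, hx.2]
    have hsq : Real.sqrt (1 - x^2) ≠ 0 := (Real.sqrt_pos.2 hs).ne'
    have hmul : Real.sqrt (1-x^2) * Real.sqrt (1-x^2) = 1 - x^2 := Real.mul_self_sqrt hs.le
    have hd1 : HasDerivAt (fun x : ℝ => Real.sqrt (1 - x^2))
        (1 / (2 * Real.sqrt (1 - x^2)) * (-2*x)) x := by
      have h := (Real.hasDerivAt_sqrt hs.ne').comp x
        ((hasDerivAt_pow 2 x).const_sub 1)
      simpa [mul_comm, Function.comp_def] using h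
    have hd2 : HasDerivAt (fun x : ℝ => u.eval x) (u.derivative.eval x) x :=
      u.hasDerivAt x
    have hd : HasDerivAt F (-(1/n) * ((1 / (2 * Real.sqrt (1 - x^2)) * (-2*x)) * u.eval x
        + Real.sqrt (1 - x^2) * u.derivative.eval x)) x :=
      ((hd1.mul hd2)).const_mul _
    convert hd using 1
    have hpoly := congrArg (Polynomial.eval x)
      (Polynomial.Chebyshev.add_one_mul_T_eq_poly_in_U (R := ℝ) ((n:ℤ) - 1))
    simp only [Polynomial.eval_mul, Polynomial.eval_add, Polynomial.eval_sub,
      Polynomial.eval_one, Polynomial.eval_X, Polynomial.eval_intCast, Polynomial.eval_pow,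
      sub_add_cancel] at hpoly
    push_cast at hpoly
    rw [← hu] at hpoly
    have hpoly2 : (n:ℝ) * Polynomial.eval x (Polynomial.Chebyshev.T ℝ (n:ℤ)) =
        x * u.eval x - (1-x^2) * u.derivative.eval x := by linear_combination hpoly
    field_simp
    linear_combination hpoly2 + u.derivative.eval x * hmul
  unfold cInt
  rw [intervalIntegral.integral_eq_sub_of_hasDeriv_right_of_le (by norm_num)
    hFc.continuousOn (fun x hx => (key x hx).hasDerivWithinAt)
    (integrable_poly_div _)]
  have : Real.sqrt (1 - (1:ℝ)^2) = 0 := by norm_num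
  have h2 : Real.sqrt (1 - (-1:ℝ)^2) = 0 := by norm_num
  simp [hF, this, h2]

lemma cInt_T (n : ℤ) : cInt (Polynomial.Chebyshev.T ℝ n) = if n = 0 then π else 0 := by
  rcases eq_or_ne n 0 with h | h
  · subst h; simpa [Polynomial.Chebyshev.T_zero] using cInt_one
  · rw [if_neg h, ← Polynomial.Chebyshev.T_natAbs]
    exact cInt_T_ne_zero n.natAbs (Int.natAbs_ne_zero.2 h)

lemma two_eq_C : (2:ℝ[X]) = Polynomial.C 2 := (map_ofNat Polynomial.C 2).symm

lemma cInt_TT (m k : ℤ) : cInt (Polynomial.Chebyshev.T ℝ m * Polynomial.Chebyshev.T ℝ k) =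
    (if m + k = 0 then π else 0) / 2 + (if m - k = 0 then π else 0) / 2 := by
  have h := Polynomial.Chebyshev.T_mul_T ℝ m k
  rw [two_eq_C] at h
  have h' : Polynomial.C (2:ℝ) * (Polynomial.Chebyshev.T ℝ m * Polynomial.Chebyshev.T ℝ k) =
      Polynomial.Chebyshev.T ℝ (m+k) + Polynomial.Chebyshev.T ℝ (m-k) := by
    linear_combination h
  have e : 2 * cInt (Polynomial.Chebyshev.T ℝ m * Polynomial.Chebyshev.T ℝ k) =
      cInt (Polynomial.Chebyshev.T ℝ (m+k)) + cInt (Polynomial.Chebyshev.T ℝ (m-k)) := by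
    rw [← cInt_C_mul, h', cInt_add]
  rw [cInt_T, cInt_T] at e
  linarith

lemma U_add_two_eq (n : ℤ) : Polynomial.Chebyshev.U ℝ (n + 2) =
    Polynomial.Chebyshev.U ℝ n + 2 * Polynomial.Chebyshev.T ℝ (n + 2) := by
  have h1 := Polynomial.Chebyshev.U_add_two ℝ n
  have h2 := Polynomial.Chebyshev.T_eq_U_sub_X_mul_U (R := ℝ) (n + 2)
  have h3 : n + 2 - 1 = n + 1 := by ring
  rw [h3] at h2
  linear_combination -h1 - 2 * h2

lemma cInt_UT (m k : ℕ) : cInt (Polynomial.Chebyshev.U ℝ (m:ℤ) * Polynomial.Chebyshev.T ℝ (k:ℤ)) =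
    if k ≤ m ∧ m % 2 = k % 2 then π else 0 := by
  induction m using Nat.twoStepInduction generalizing k with
  | zero =>
    simp only [Nat.cast_zero]
    rw [show Polynomial.Chebyshev.U ℝ 0 = Polynomial.Chebyshev.T ℝ 0 by
      rw [Polynomial.Chebyshev.U_zero, Polynomial.Chebyshev.T_zero], cInt_TT]
    rcases Nat.eq_zero_or_pos k with hk | hk
    · subst hk; norm_num
    · rw [if_neg (show ¬((0:ℤ) + k = 0) by omega),
        if_neg (show ¬((0:ℤ) - k = 0) by omega), if_neg (by omega)]
      norm_num
  | one =>
    simp only [Nat.cast_one]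
    have hU1 : Polynomial.Chebyshev.U ℝ 1 = Polynomial.C (2:ℝ) * Polynomial.Chebyshev.T ℝ 1 := by
      rw [Polynomial.Chebyshev.U_one, Polynomial.Chebyshev.T_one, two_eq_C]
    rw [hU1, mul_assoc, cInt_C_mul, cInt_TT]
    rcases eq_or_ne k 1 with hk | hk
    · subst hk
      rw [if_neg (show ¬((1:ℤ) + (1:ℕ) = 0) by omega),
        if_pos (show (1:ℤ) - (1:ℕ) = 0 by norm_num), if_pos (by omega)]
      ring
    · rw [if_neg (show ¬((1:ℤ) + k = 0) by omega),
        if_neg (show ¬((1:ℤ) - k = 0) by omega), if_neg (by omega)]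
      ring
  | more m ih _ =>
    have hcast : ((m + 2 : ℕ) : ℤ) = (m:ℤ) + 2 := by push_cast; ring
    have hsplit : Polynomial.Chebyshev.U ℝ ((m+2:ℕ):ℤ) * Polynomial.Chebyshev.T ℝ (k:ℤ) =
        Polynomial.Chebyshev.U ℝ (m:ℤ) * Polynomial.Chebyshev.T ℝ (k:ℤ) +
        Polynomial.C (2:ℝ) * (Polynomial.Chebyshev.T ℝ ((m:ℤ)+2) * Polynomial.Chebyshev.T ℝ (k:ℤ)) := by
      rw [hcast, U_add_two_eq, two_eq_C]
      ring
    rw [hsplit, cInt_add, cInt_C_mul, ih, cInt_TT]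
    rw [if_neg (show ¬((m:ℤ) + 2 + k = 0) by omega)]
    rcases eq_or_ne k (m+2) with hk | hk
    · subst hk
      rw [if_neg (show ¬(m+2 ≤ m ∧ m % 2 = (m+2) % 2) by omega),
        if_pos (show (m:ℤ) + 2 - ((m+2:ℕ):ℤ) = 0 by push_cast; ring),
        if_pos (show m+2 ≤ m+2 ∧ (m+2)%2 = (m+2)%2 by omega)]
      ring
    · rw [if_neg (show ¬((m:ℤ) + 2 - k = 0) by omega)]
      by_cases hc : k ≤ m ∧ m % 2 = k % 2
      · rw [if_pos hc, if_pos (show k ≤ m+2 ∧ (m+2)%2 = k%2 by omega)]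
        ring
      · rw [if_neg hc, if_neg (show ¬(k ≤ m+2 ∧ (m+2)%2 = k%2) by omega)]
        ring

lemma deriv_shenD (j : ℕ) : Polynomial.derivative (shenD j) =
    Polynomial.C (-2:ℝ) * Polynomial.Chebyshev.U ℝ ((j:ℤ) - 1) +
    Polynomial.C (-2*((j:ℝ)+2)) * Polynomial.Chebyshev.T ℝ ((j:ℤ)+1) := by
  have hd1 := Polynomial.Chebyshev.T_derivative_eq_U (R := ℝ) (j:ℤ)
  have hd2 := Polynomial.Chebyshev.T_derivative_eq_U (R := ℝ) ((j:ℤ)+2)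
  have hU := U_add_two_eq ((j:ℤ) - 1)
  rw [show (j:ℤ) - 1 + 2 = (j:ℤ)+1 by ring] at hU
  rw [show (j:ℤ) + 2 - 1 = (j:ℤ)+1 by ring] at hd2
  unfold shenD chebT
  rw [show ((j+2:ℕ):ℤ) = (j:ℤ)+2 by push_cast; ring, Polynomial.derivative_sub, hd1, hd2, hU]
  have hcC : Polynomial.C (-2*((j:ℝ)+2)) =
      -2 * (((j:ℤ):ℝ[X]) + 2) := by
    simp only [map_mul, map_add, map_neg, map_ofNat, Polynomial.C_eq_natCast]
    push_cast
    ring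
  have hcC2 : Polynomial.C (-2:ℝ) = (-2 : ℝ[X]) := by
    rw [map_neg, map_ofNat]
  rw [hcC, hcC2]
  push_cast
  ring

lemma chebInner_eq (p q : Polynomial ℝ) : chebInner p q = cInt (p * q) := by
  unfold chebInner cInt
  simp [Polynomial.eval_mul]

lemma C_main (j k : ℕ) : chebInner (Polynomial.derivative (shenD j)) (chebT k) =
    -2 * cInt (Polynomial.Chebyshev.U ℝ ((j:ℤ) - 1) * Polynomial.Chebyshev.T ℝ (k:ℤ))
    + (-2*((j:ℝ)+2)) * cInt (Polynomial.Chebyshev.T ℝ ((j:ℤ)+1) * Polynomial.Chebyshev.T ℝ (k:ℤ)) := by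
  rw [chebInner_eq, deriv_shenD]
  unfold chebT
  rw [add_mul, mul_assoc, mul_assoc, cInt_add, cInt_C_mul, cInt_C_mul]

/-- The matrix `C_{kj} = ⟨φ̂_j', T_k⟩_σ`: `C_{k,k−1} = −π(k+1)`, `C_{kj} = −2π`
for `j ≥ k+1` with `j − k` odd, and `C_{kj} = 0` otherwise (whenever `j − k` is
even, or `j ≤ k − 2`). -/
theorem shen_first_derivative_matrix_DT :
    -- j = k − 1 (stated with row index k+1): C_{k+1,k} = −π((k+1)+1)
    (∀ k : ℕ, chebInner (Polynomial.derivative (shenD k)) (chebT (k + 1)) =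
      -Real.pi * (((k : ℝ) + 1) + 1)) ∧
    -- j ≥ k + 1 with j − k odd: C_{kj} = −2π
    (∀ j k : ℕ, k + 1 ≤ j → (j - k) % 2 = 1 →
      chebInner (Polynomial.derivative (shenD j)) (chebT k) = -2 * Real.pi) ∧
    -- otherwise zero: j − k even, or j ≤ k − 2
    (∀ j k : ℕ, j % 2 = k % 2 ∨ j + 2 ≤ k →
      chebInner (Polynomial.derivative (shenD j)) (chebT k) = 0) := by
  refine ⟨?_, ?_, ?_⟩
  · intro k
    rw [C_main k (k+1)]
    have hTT : cInt (Polynomial.Chebyshev.T ℝ ((k:ℤ)+1) * Polynomial.Chebyshev.T ℝ ((k+1:ℕ):ℤ)) =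
        π / 2 := by
      rw [cInt_TT, if_neg (by omega), if_pos (by push_cast; ring)]
      ring
    have hUT : cInt (Polynomial.Chebyshev.U ℝ ((k:ℤ) - 1) * Polynomial.Chebyshev.T ℝ ((k+1:ℕ):ℤ)) = 0 := by
      rcases k with _ | m
      · rw [show ((0:ℕ):ℤ) - 1 = -1 by norm_num, Polynomial.Chebyshev.U_neg_one, zero_mul, cInt_zero]
      · rw [show ((m+1:ℕ):ℤ) - 1 = ((m:ℕ):ℤ) by push_cast; ring, cInt_UT]
        rw [if_neg (by omega)]
    rw [hTT, hUT]
    ring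
  · intro j k hjk hodd
    rw [C_main j k]
    obtain ⟨m, rfl⟩ : ∃ m, j = m + 1 := ⟨j - 1, by omega⟩
    have hUT : cInt (Polynomial.Chebyshev.U ℝ (((m+1:ℕ):ℤ) - 1) * Polynomial.Chebyshev.T ℝ (k:ℤ)) = π := by
      rw [show ((m+1:ℕ):ℤ) - 1 = ((m:ℕ):ℤ) by push_cast; ring, cInt_UT, if_pos (by omega)]
    have hTT : cInt (Polynomial.Chebyshev.T ℝ (((m+1:ℕ):ℤ)+1) * Polynomial.Chebyshev.T ℝ (k:ℤ)) = 0 := by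
      rw [cInt_TT, if_neg (by omega), if_neg (by omega)]
      ring
    rw [hUT, hTT]
    ring
  · intro j k hcase
    rw [C_main j k]
    have hTT : cInt (Polynomial.Chebyshev.T ℝ ((j:ℤ)+1) * Polynomial.Chebyshev.T ℝ (k:ℤ)) = 0 := by
      rw [cInt_TT, if_neg (by omega), if_neg (by omega)]
      ring
    have hUT : cInt (Polynomial.Chebyshev.U ℝ ((j:ℤ) - 1) * Polynomial.Chebyshev.T ℝ (k:ℤ)) = 0 := by
      rcases j with _ | m
      · rw [show ((0:ℕ):ℤ) - 1 = -1 by norm_num, Polynomial.Chebyshev.U_neg_one, zero_mul, cInt_zero]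
      · rw [show ((m+1:ℕ):ℤ) - 1 = ((m:ℕ):ℤ) by push_cast; ring, cInt_UT]
        rw [if_neg (by omega)]
    rw [hTT, hUT]
    ring
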